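/- Let $z$ be a real number with $0 < z < 1/2$, and let $N$ be the nearest integer to $1/z$. Write $z = 1/N + z'$. Then $N \geq 2$ and $|z'| < 1/N^2$; moreover for every real number $r$, there is at most one integer $x$ with $|x| < N/2$ for which the inequality $\|r + zx\| \geq \frac{1}{2}\|r + x/N\|$ fails. -/

import Mathlib

/-- Distance from a real number to the nearest integer. -/
noncomputable def nint (x : ℝ) : ℝ := |x - round x|

lemma nint_le_abs_sub (t : ℝ) (m : ℤ) : nint t ≤ |t - m| := round_le t m

/-- triangle-ish: nint (a - b) ≤ nint a + nint b -/
lemma nint_sub_le (a b : ℝ) : nint (a - b) ≤ nint a + nint b := by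
  have h := nint_le_abs_sub (a - b) (round a - round b)
  calc nint (a - b) ≤ |(a - b) - ((round a : ℝ) - (round b : ℝ))| := by
        simpa using h
    _ = |(a - round a) - (b - round b)| := by ring_nf
    _ ≤ |a - round a| + |b - round b| := abs_sub _ _
    _ = nint a + nint b := rfl

/-- if 1 ≤ |k| ≤ N-1 then nint (k/N) ≥ 1/N -/
lemma nint_div_ge (k N : ℤ) (hN : 0 < N) (hk0 : k ≠ 0) (hk : |k| < N) :
    1 / (N : ℝ) ≤ nint ((k : ℝ) / N) := by
  have hNR : (0 : ℝ) < N := by exact_mod_cast hN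
  set m := round ((k : ℝ) / N) with hm
  have hne : k - m * N ≠ 0 := by
    intro h
    have hdvd : N ∣ k := ⟨m, by linarith [sub_eq_zero.mp h]⟩
    have h2 := Int.le_of_dvd (abs_pos.mpr hk0) ((dvd_abs N k).mpr hdvd)
    linarith
  have h1 : (1 : ℤ) ≤ |k - m * N| := by
    rcases abs_pos.mpr hne with h
    omega
  have heq : nint ((k : ℝ) / N) = |(k : ℝ) - m * N| / N := by
    rw [nint, ← hm, show (k : ℝ) / N - m = ((k : ℝ) - m * N) / N by field_simp,
      abs_div, abs_of_pos hNR]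
  rw [heq]
  have h1R : (1 : ℝ) ≤ |(k : ℝ) - m * N| := by
    have h2 : ((1 : ℤ) : ℝ) ≤ ((|k - m * N| : ℤ) : ℝ) := by exact_mod_cast h1
    calc (1 : ℝ) = ((1 : ℤ) : ℝ) := by norm_num
      _ ≤ ((|k - m * N| : ℤ) : ℝ) := h2
      _ = |(k : ℝ) - m * N| := by push_cast; ring_nf
  gcongr

set_option maxHeartbeats 1000000 in
/-- Let `0 < z < 1/2` and let `N` be the nearest integer to `1/z`, and write
`z = 1/N + z'`. Then `N ≥ 2`, `|z'| < 1/N²`, and for every real `r` there is at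
most one integer `x` with `|x| < N/2` for which `‖r + zx‖ ≥ (1/2)‖r + x/N‖` fails. -/
theorem stmt_4 (z : ℝ) (hz0 : 0 < z) (hz1 : z < 1 / 2)
    (N : ℤ) (hN : |(N : ℝ) - 1 / z| ≤ 1 / 2) :
    2 ≤ N ∧ |z - 1 / (N : ℝ)| < 1 / (N : ℝ) ^ 2 ∧
      ∀ r : ℝ, ∃ x0 : ℤ, ∀ x : ℤ, |(x : ℝ)| < (N : ℝ) / 2 →
        ¬ ((1 / 2) * nint (r + (x : ℝ) / (N : ℝ)) ≤ nint (r + z * (x : ℝ))) →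
        x = x0 := by
  have hzinv : (2 : ℝ) < 1 / z := by
    rw [lt_div_iff₀ hz0]; linarith
  have habs := abs_le.mp hN
  have hNR32 : (3 : ℝ) / 2 < (N : ℝ) := by linarith [habs.1]
  have hN2 : 2 ≤ N := by
    have h1 : (1 : ℝ) < (N : ℝ) := by linarith
    have h2 : (1 : ℤ) < N := by exact_mod_cast h1
    omega
  have hNR : (2 : ℝ) ≤ (N : ℝ) := by exact_mod_cast hN2
  have hNpos : (0 : ℝ) < N := by linarith
  have hzz : z * (1 / z) = 1 := by field_simp
  -- z ≤ 2/(2N-1)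
  have hzub : z * (2 * N - 1) ≤ 2 := by
    have h1 : (N : ℝ) - 1 / 2 ≤ 1 / z := by linarith [habs.1]
    nlinarith [mul_le_mul_of_nonneg_left h1 hz0.le]
  -- |z'| ≤ z/(2N)
  have hz' : |z - 1 / (N : ℝ)| ≤ z / (2 * N) := by
    have key : z - 1 / N = z * ((N : ℝ) - 1 / z) / N := by
      field_simp
    rw [key, abs_div, abs_of_pos hNpos, abs_mul, abs_of_pos hz0]
    rw [div_le_div_iff₀ hNpos (by linarith)]
    have h2 := mul_le_mul_of_nonneg_left hN hz0.le
    nlinarith [abs_nonneg ((N : ℝ) - 1 / z)]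
  have hz'lt : |z - 1 / (N : ℝ)| < 1 / (N : ℝ) ^ 2 := by
    have h1 : z / (2 * N) < 1 / (N : ℝ) ^ 2 := by
      rw [div_lt_div_iff₀ (by linarith) (by positivity)]
      nlinarith
    linarith
  refine ⟨hN2, hz'lt, fun r => ?_⟩
  set z' := z - 1 / (N : ℝ) with hz'def
  have hz'ub : |z'| ≤ 1 / ((N : ℝ) * (2 * N - 1)) := by
    have h1 : z / (2 * N) ≤ 1 / ((N : ℝ) * (2 * N - 1)) := by
      rw [div_le_div_iff₀ (by linarith) (by nlinarith)]
      nlinarith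
    linarith
  -- key: a failing x satisfies nint(r + x/N) < 2 |z'| |x|
  have key : ∀ x : ℤ, ¬ ((1 / 2) * nint (r + (x : ℝ) / (N : ℝ)) ≤ nint (r + z * (x : ℝ))) →
      nint (r + (x : ℝ) / N) < 2 * |z'| * |(x : ℝ)| := by
    intro x hfail
    push_neg at hfail
    have hsplit : r + z * x = (r + (x : ℝ) / N) + z' * x := by
      rw [hz'def]; field_simp; ring
    have h1 : nint (r + (x : ℝ) / N) ≤ nint (r + z * x) + |z' * x| := by
      have h0 := nint_le_abs_sub (r + (x : ℝ) / N) (round (r + z * x))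
      calc nint (r + (x : ℝ) / N) ≤ |(r + (x : ℝ) / N) - round (r + z * x)| := h0
        _ = |((r + z * x) - round (r + z * x)) - z' * x| := by rw [hsplit]; ring_nf
        _ ≤ |(r + z * x) - round (r + z * x)| + |z' * x| := abs_sub _ _
        _ = nint (r + z * x) + |z' * x| := rfl
    rw [abs_mul] at h1
    linarith
  by_cases hex : ∃ x : ℤ, |(x : ℝ)| < (N : ℝ) / 2 ∧
      ¬ ((1 / 2) * nint (r + (x : ℝ) / (N : ℝ)) ≤ nint (r + z * (x : ℝ)))
  · obtain ⟨x0, hx0b, hx0f⟩ := hex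
    refine ⟨x0, fun x hxb hxf => ?_⟩
    by_contra hne
    -- two distinct failing values: contradiction
    have hk0 : x - x0 ≠ 0 := fun h => hne (by omega)
    have hb1 : 2 * |x| ≤ N - 1 := by
      have h : ((2 * |x| : ℤ) : ℝ) < (N : ℝ) := by push_cast; linarith
      have h2 : 2 * |x| < N := by exact_mod_cast h
      omega
    have hb2 : 2 * |x0| ≤ N - 1 := by
      have h : ((2 * |x0| : ℤ) : ℝ) < (N : ℝ) := by push_cast; linarith
      have h2 : 2 * |x0| < N := by exact_mod_cast h
      omega
    have hkb : |x - x0| < N := by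
      have h1 := abs_sub x x0
      linarith
    -- lower bound
    have hlow : 1 / (N : ℝ) ≤ nint (r + (x : ℝ) / N) + nint (r + (x0 : ℝ) / N) := by
      have h1 := nint_sub_le (r + (x : ℝ) / N) (r + (x0 : ℝ) / N)
      have h2 : (r + (x : ℝ) / N) - (r + (x0 : ℝ) / N) = ((x - x0 : ℤ) : ℝ) / N := by
        push_cast; ring
      rw [h2] at h1
      exact (nint_div_ge (x - x0) N (by omega) hk0 hkb).trans h1
    -- upper bound
    have hup1 := key x hxf
    have hup2 := key x0 hx0f
    have hsum : |(x : ℝ)| + |(x0 : ℝ)| ≤ ((N : ℝ) - 1) := by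
      have h3 : |x| + |x0| ≤ N - 1 := by linarith
      have h4 : ((|x| + |x0| : ℤ) : ℝ) ≤ ((N - 1 : ℤ) : ℝ) := by exact_mod_cast h3
      push_cast at h4
      linarith
    have hA : (0 : ℝ) < (N : ℝ) * (2 * N - 1) := by nlinarith
    have hfinal : 2 * |z'| * (|(x : ℝ)| + |(x0 : ℝ)|) < 1 / N := by
      have hz2 : 2 * |z'| ≤ 2 * (1 / ((N : ℝ) * (2 * N - 1))) := by linarith
      have habsnn : (0:ℝ) ≤ |(x : ℝ)| + |(x0 : ℝ)| := by positivity
      have hcnn : (0:ℝ) ≤ 2 * (1 / ((N : ℝ) * (2 * N - 1))) := by positivity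
      have h2 := mul_le_mul hz2 hsum habsnn hcnn
      have h3 : 2 * (1 / ((N : ℝ) * (2 * N - 1))) * ((N : ℝ) - 1) < 1 / N := by
        rw [show 2 * (1 / ((N : ℝ) * (2 * N - 1))) * ((N : ℝ) - 1)
            = (2 * ((N : ℝ) - 1)) / ((N : ℝ) * (2 * N - 1)) by ring]
        rw [div_lt_div_iff₀ hA hNpos]
        nlinarith
      linarith
    nlinarith [hfinal, hup1, hup2, hlow]
  · push_neg at hex
    exact ⟨0, fun x hxb hxf => absurd (hex x hxb) (by simpa using hxf)⟩
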